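/- Let k ≥ 0, r ≥ 1 and n_1,…,n_r ≥ 1 be integers. Then there exist pairwise disjoint finite sets I_1,…,I_r ⊂ ℝ with |I_i| = n_i + 1 for all i, such that, writing w_a := (a_1, …, a_r, Σ_{i∈[r]} a_i², …, Σ_{i∈[r]} a_i^{2k+2}) ∈ ℝ^{2k+r+1} for a = (a_1,…,a_r) ∈ I_1×⋯×I_r, the following holds: for every choice of nonempty subsets A_i ⊆ I_i (i ∈ [r]) with Σ_{i∈[r]}(|A_i| − 1) = k, there exist c ∈ ℝ^{2k+r+1} and β ∈ ℝ with ⟨c, w_a⟩ ≤ β for all a ∈ I_1×⋯×I_r, and with equality if and only if a ∈ A_1×⋯×A_r. -/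

import Mathlib

open Finset

/-- The point `w_a = (a_1, …, a_r, Σ a_i², Σ a_i³, …, Σ a_i^{2k+2}) ∈ ℝ^{2k+r+1}`. -/
noncomputable def wvec (k r : ℕ) (a : Fin r → ℝ) : Fin (2 * k + r + 1) → ℝ :=
  fun j => if h : j.val < r then a ⟨j.val, h⟩ else ∑ i, (a i) ^ (j.val - r + 2)

noncomputable section
open Polynomial




/-- Roots of `p` (with multiplicity) lying in `[s,t]`. -/
def rIn (p : ℝ[X]) (s t : ℝ) : Multiset ℝ :=
  p.roots.filter (fun x => s ≤ x ∧ x ≤ t)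

lemma sum_count_le {α : Type*} [DecidableEq α] (F : Finset α) (m : Multiset α) :
    ∑ x ∈ F, m.count x ≤ Multiset.card m := by
  classical
  have h1 : ∀ x ∈ F, m.count x = (m.filter (· ∈ F)).count x := by
    intro x hx
    rw [Multiset.count_filter, if_pos hx]
  rw [Finset.sum_congr rfl h1]
  have hsub : (m.filter (· ∈ F)).toFinset ⊆ F := by
    intro x hx
    rw [Multiset.mem_toFinset, Multiset.mem_filter] at hx
    exact hx.2
  rw [← Finset.sum_subset hsub (fun x _ hx => by
    rw [Multiset.count_eq_zero]
    rwa [Multiset.mem_toFinset] at hx)]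
  rw [Multiset.toFinset_sum_count_eq]
  exact Multiset.card_le_card (Multiset.filter_le _ _)

lemma rIn_card_le_derivative (p : ℝ[X]) (s t : ℝ) :
    Multiset.card (rIn p s t) ≤ Multiset.card (rIn (derivative p) s t) + 1 := by
  rcases eq_or_ne (derivative p) 0 with hp' | hp'
  · rcases eq_or_ne p 0 with h0 | h0
    · simp [rIn, h0]
    · rw [eq_C_of_derivative_eq_zero hp']
      simp [rIn, roots_C]
  have hp : p ≠ 0 := ne_of_apply_ne derivative (by rwa [derivative_zero])
  classical
  set T : Finset ℝ := (rIn p s t).toFinset with hT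
  set T' : Finset ℝ := (rIn (derivative p) s t).toFinset with hT'
  have memT : ∀ x, x ∈ T ↔ (p.IsRoot x ∧ (s ≤ x ∧ x ≤ t)) := by
    intro x
    simp [hT, rIn, Multiset.mem_toFinset, Multiset.mem_filter, mem_roots hp, and_comm]
  have memT' : ∀ x, x ∈ T' ↔ ((derivative p).IsRoot x ∧ (s ≤ x ∧ x ≤ t)) := by
    intro x
    simp [hT', rIn, Multiset.mem_toFinset, Multiset.mem_filter, mem_roots hp']
  -- interleaving
  have hinter : T.card ≤ (T' \ T).card + 1 := by
    refine Finset.card_le_diff_of_interleaved fun x hx y hy hxy _ => ?_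
    rw [memT] at hx hy
    obtain ⟨z, hz1, hz2⟩ := exists_deriv_eq_zero hxy p.continuousOn
      (hx.1.trans hy.1.symm)
    refine ⟨z, ?_, hz1.1, hz1.2⟩
    rw [memT']
    refine ⟨?_, le_trans hx.2.1 hz1.1.le, le_trans hz1.2.le hy.2.2⟩
    rwa [IsRoot, ← p.deriv]
  -- counting
  have hcount : ∀ x ∈ T, (rIn p s t).count x = p.rootMultiplicity x := by
    intro x hx
    rw [memT] at hx
    rw [rIn, Multiset.count_filter, if_pos hx.2, count_roots]
  have hcount' : ∀ x ∈ T, (rIn (derivative p) s t).count x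
      = (derivative p).rootMultiplicity x := by
    intro x hx
    rw [memT] at hx
    rw [rIn, Multiset.count_filter, if_pos hx.2, count_roots]
  calc Multiset.card (rIn p s t) = ∑ x ∈ T, (rIn p s t).count x :=
        (Multiset.toFinset_sum_count_eq _).symm
    _ = ∑ x ∈ T, p.rootMultiplicity x := Finset.sum_congr rfl hcount
    _ = ∑ x ∈ T, (p.rootMultiplicity x - 1 + 1) := by
        refine Finset.sum_congr rfl fun x hx => ?_
        rw [memT] at hx
        exact (tsub_add_cancel_of_le (Nat.succ_le_iff.2 <|
          (rootMultiplicity_pos hp).2 hx.1)).symm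
    _ = (∑ x ∈ T, (p.rootMultiplicity x - 1)) + T.card := by
        rw [Finset.sum_add_distrib]
        congr 1
        rw [Finset.card_eq_sum_ones]
    _ ≤ (∑ x ∈ T, (derivative p).rootMultiplicity x) + ((T' \ T).card + 1) := by
        refine add_le_add (Finset.sum_le_sum fun x _ => ?_) hinter
        exact rootMultiplicity_sub_one_le_derivative_rootMultiplicity_of_ne_zero _ _ hp'
    _ ≤ (∑ x ∈ T, (rIn (derivative p) s t).count x)
        + ((∑ x ∈ T' \ T, (rIn (derivative p) s t).count x) + 1) := by
        refine add_le_add (le_of_eq (Finset.sum_congr rfl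
          fun x hx => (hcount' x hx).symm)) (Nat.add_le_add_right ?_ 1)
        rw [Finset.card_eq_sum_ones]
        refine Finset.sum_le_sum fun x hx => ?_
        have hx' : x ∈ T' := (Finset.mem_sdiff.1 hx).1
        rw [memT'] at hx'
        have hmem : x ∈ rIn (derivative p) s t := by
          rw [rIn, Multiset.mem_filter]
          exact ⟨(mem_roots hp').2 hx'.1, hx'.2⟩
        exact Nat.succ_le_iff.2 (Multiset.count_pos.2 hmem)
    _ ≤ Multiset.card (rIn (derivative p) s t) + 1 := by
        rw [← add_assoc, ← Finset.sum_union Finset.disjoint_sdiff]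
        exact Nat.add_le_add_right (sum_count_le _ _) 1





/-- Sign constancy of a polynomial with no roots on an interval. -/
lemma eval_mul_pos_of_no_root (p : ℝ[X]) (s t : ℝ)
    (hroot : ∀ z, s ≤ z → z ≤ t → p.eval z ≠ 0)
    {x y : ℝ} (hx : s ≤ x) (hx' : x ≤ t) (hy : s ≤ y) (hy' : y ≤ t) :
    0 < p.eval x * p.eval y := by
  have key : ∀ u v : ℝ, s ≤ u → u ≤ t → s ≤ v → v ≤ t → u ≤ v →
      0 < p.eval u * p.eval v := by
    intro u v hu hu' hv hv' huv
    have hu0 := hroot u hu hu'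
    have hv0 := hroot v hv hv'
    rcases lt_or_gt_of_ne hu0 with hun | hup
    · rcases lt_or_gt_of_ne hv0 with hvn | hvp
      · exact mul_pos_of_neg_of_neg hun hvn
      · exfalso
        have h0 : (0:ℝ) ∈ Set.Icc (p.eval u) (p.eval v) := ⟨hun.le, hvp.le⟩
        obtain ⟨z, hz, hz0⟩ := intermediate_value_Icc huv
          (p.continuousOn (s := Set.Icc u v)) h0
        exact hroot z (le_trans hu hz.1) (le_trans hz.2 hv') hz0
    · rcases lt_or_gt_of_ne hv0 with hvn | hvp
      · exfalso
        have h0 : (0:ℝ) ∈ Set.Icc (p.eval v) (p.eval u) := ⟨hvn.le, hup.le⟩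
        obtain ⟨z, hz, hz0⟩ := intermediate_value_Icc' huv
          (p.continuousOn (s := Set.Icc u v)) h0
        exact hroot z (le_trans hu hz.1) (le_trans hz.2 hv') hz0
      · exact mul_pos hup hvp
  rcases le_total x y with h | h
  · exact key x y hx hx' hy hy' h
  · rw [mul_comm]; exact key y x hy hy' hx hx' h

/-- A double root gives divisibility by `(X - C α)^2`. -/
lemma sq_dvd_of_double_root (f : ℝ[X]) (α : ℝ) (h0 : f.eval α = 0)
    (h1 : (derivative f).eval α = 0) : (X - C α)^2 ∣ f := by
  obtain ⟨g, hg⟩ := Polynomial.dvd_iff_isRoot.mpr h0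
  have hga : g.eval α = 0 := by
    rw [hg] at h1
    simpa [derivative_mul, eval_add, eval_mul, eval_sub, eval_X, eval_C] using h1
  obtain ⟨g2, hg2⟩ := Polynomial.dvd_iff_isRoot.mpr hga
  exact ⟨g2, by rw [hg, hg2]; ring⟩

/-- Product of `(X - C α)^2` over a finset divides `f`. -/
lemma prod_sq_dvd (A : Finset ℝ) (f : ℝ[X])
    (h : ∀ α ∈ A, (X - C α)^2 ∣ f) : (∏ α ∈ A, (X - C α))^2 ∣ f := by
  rw [← Finset.prod_pow]
  refine Finset.prod_dvd_of_coprime ?_ h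
  intro a ha b hb hab
  exact (Polynomial.isCoprime_X_sub_C_of_isUnit_sub
    ((sub_ne_zero.2 hab).isUnit)).pow

/-- disjoint filtered counts. -/
lemma sum_card_filter_le {ι α : Type*} [DecidableEq ι]
    (t : Finset ι) (P : ι → α → Prop) [∀ i, DecidablePred (P i)]
    (m : Multiset α)
    (hdis : ∀ i ∈ t, ∀ j ∈ t, i ≠ j → ∀ x, ¬(P i x ∧ P j x)) :
    ∑ i ∈ t, Multiset.card (m.filter (P i)) ≤ Multiset.card m := by
  classical
  induction t using Finset.induction_on generalizing m with
  | empty => simp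
  | @insert a t ha IH =>
    rw [Finset.sum_insert ha]
    set m' := m.filter (fun x => ¬ P a x) with hm'
    have h1 : ∀ i ∈ t, m.filter (P i) = m'.filter (P i) := by
      intro i hi
      rw [hm', Multiset.filter_filter]
      refine (Multiset.filter_congr ?_).symm
      intro x _
      constructor
      · rintro ⟨h, _⟩; exact h
      · intro h
        refine ⟨h, fun hPa => ?_⟩
        exact hdis i (Finset.mem_insert_of_mem hi) a (Finset.mem_insert_self a t)
          (by rintro rfl; exact ha hi) x ⟨h, hPa⟩
    have h2 : ∑ i ∈ t, Multiset.card (m.filter (P i)) ≤ Multiset.card m' := by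
      rw [Finset.sum_congr rfl (fun i hi => by rw [h1 i hi])]
      exact IH m' (fun i hi j hj hij => hdis i (Finset.mem_insert_of_mem hi) j
        (Finset.mem_insert_of_mem hj) hij)
    have h3 : Multiset.card (m.filter (P a)) + Multiset.card m' = Multiset.card m := by
      rw [hm', ← Multiset.card_add, Multiset.filter_add_not]
    omega

/-- Removing an element not satisfying `P` does not change the filter. -/
lemma filter_erase_of_not {α : Type*} [DecidableEq α] (P : α → Prop) [DecidablePred P]
    (m : Multiset α) (ρ : α) (hρ : ρ ∈ m) (hnP : ¬ P ρ) :
    m.filter P = (m.erase ρ).filter P := by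
  conv_lhs => rw [← Multiset.cons_erase hρ]
  rw [Multiset.filter_cons_of_neg _ hnP]

/-- Second derivative evaluation at a double root. -/
lemma eval_dd_sq_mul (H : ℝ[X]) (α : ℝ) :
    (derivative (derivative ((X - C α)^2 * H))).eval α = 2 * H.eval α := by
  simp only [derivative_mul, derivative_pow, derivative_sub, derivative_X,
    derivative_C, derivative_one]
  simp only [derivative_add, derivative_mul, derivative_pow, derivative_sub,
    derivative_X, derivative_C]
  simp [eval_add, eval_mul, eval_pow, eval_sub, eval_X, eval_C]





/-- The polynomial `∑ c_m X^{m+2}`. -/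
def qpoly (k : ℕ) (c : Fin (2*k+1) → ℝ) : ℝ[X] :=
  ∑ m : Fin (2*k+1), C (c m) * X^((m:ℕ)+2)

lemma qpoly_add (k : ℕ) (c c' : Fin (2*k+1) → ℝ) :
    qpoly k (c + c') = qpoly k c + qpoly k c' := by
  simp [qpoly, C_add, add_mul, Finset.sum_add_distrib]

lemma qpoly_smul (k : ℕ) (a : ℝ) (c : Fin (2*k+1) → ℝ) :
    qpoly k (a • c) = C a * qpoly k c := by
  simp [qpoly, C_mul, mul_assoc, Finset.mul_sum]

lemma qpoly_coeff_add_two (k : ℕ) (c : Fin (2*k+1) → ℝ) (m : Fin (2*k+1)) :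
    (qpoly k c).coeff ((m:ℕ)+2) = c m := by
  rw [qpoly, finset_sum_coeff]
  rw [Finset.sum_eq_single m]
  · simp [coeff_C_mul, coeff_X_pow]
  · intro m' _ hne
    simp only [coeff_C_mul, coeff_X_pow]
    rw [if_neg, mul_zero]
    intro h
    exact hne (Fin.ext (by omega))
  · intro h
    exact absurd (Finset.mem_univ m) h

lemma qpoly_natDegree_le (k : ℕ) (c : Fin (2*k+1) → ℝ) :
    (qpoly k c).natDegree ≤ 2*k+2 := by
  refine Polynomial.natDegree_sum_le_of_forall_le _ _ fun m _ => ?_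
  refine le_trans (natDegree_C_mul_le _ _) ?_
  rw [natDegree_X_pow]
  omega

lemma qpoly_ne_zero (k : ℕ) (c : Fin (2*k+1) → ℝ) (hc : c ≠ 0) :
    qpoly k c ≠ 0 := by
  intro h
  apply hc
  funext m
  have := qpoly_coeff_add_two k c m
  rw [h, coeff_zero] at this
  simpa using this.symm

/-- Existence of a nonzero tangency certificate. -/
lemma exists_tangent (k r : ℕ) (A : Fin r → Finset ℝ)
    (hA : ∀ i, (A i).Nonempty)
    (hsum : ∑ i, (A i).card = k + r) :
    ∃ (c : Fin (2*k+1) → ℝ) (μ ν : Fin r → ℝ), c ≠ 0 ∧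
      ∀ i : Fin r, ∀ α ∈ A i,
        ((qpoly k c).eval α + μ i * α + ν i = 0) ∧
        ((derivative (qpoly k c)).eval α + μ i = 0) := by
  classical
  set L : ((Fin (2*k+1) → ℝ) × ((Fin r → ℝ) × (Fin r → ℝ))) →ₗ[ℝ]
      ((Σ i : Fin r, {x // x ∈ A i}) → ℝ × ℝ) :=
    { toFun := fun v => fun p =>
        ((qpoly k v.1).eval p.2.1 + v.2.1 p.1 * p.2.1 + v.2.2 p.1,
         (derivative (qpoly k v.1)).eval p.2.1 + v.2.1 p.1)
      map_add' := by
        intro v w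
        funext p
        simp only [Prod.fst_add, Prod.snd_add, Pi.add_apply, qpoly_add,
          derivative_add, eval_add, Prod.mk_add_mk, Prod.mk.injEq]
        constructor <;> ring
      map_smul' := by
        intro a v
        funext p
        simp only [Prod.smul_fst, Prod.smul_snd, Pi.smul_apply, qpoly_smul,
          derivative_C_mul, eval_mul, eval_C, smul_eq_mul, RingHom.id_apply,
          Prod.smul_mk, Prod.mk.injEq]
        constructor <;> ring } with hL
  have hW : Module.finrank ℝ ((Σ i : Fin r, {x // x ∈ A i}) → ℝ × ℝ) = 2*(k+r) := by
    have h1 : Module.finrank ℝ ((Σ i : Fin r, {x // x ∈ A i}) → ℝ × ℝ)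
        = Fintype.card (Σ i : Fin r, {x // x ∈ A i}) * 2 := by
      rw [Module.finrank_pi_fintype]
      simp [Module.finrank_prod, mul_comm]
    rw [h1]
    have h2 : Fintype.card (Σ i : Fin r, {x // x ∈ A i}) = k + r := by
      rw [Fintype.card_sigma]
      simp only [Fintype.card_coe]
      rw [hsum]
    rw [h2]
    ring
  have hV : Module.finrank ℝ ((Fin (2*k+1) → ℝ) × ((Fin r → ℝ) × (Fin r → ℝ)))
      = 2*k+1 + (r + r) := by
    simp [Module.finrank_prod, Module.finrank_pi]
  have hker : LinearMap.ker L ≠ ⊥ := by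
    intro hbot
    have hinj : Function.Injective L := LinearMap.ker_eq_bot.mp hbot
    have := LinearMap.finrank_le_finrank_of_injective hinj
    rw [hV, hW] at this
    omega
  obtain ⟨v, hvker, hvne⟩ := Submodule.exists_mem_ne_zero_of_ne_bot hker
  have hE : ∀ i : Fin r, ∀ α ∈ A i,
      ((qpoly k v.1).eval α + v.2.1 i * α + v.2.2 i = 0) ∧
      ((derivative (qpoly k v.1)).eval α + v.2.1 i = 0) := by
    intro i α hα
    have h0 : L v = 0 := LinearMap.mem_ker.mp hvker
    have h1 := congrFun h0 ⟨i, ⟨α, hα⟩⟩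
    rw [Prod.ext_iff] at h1
    exact ⟨h1.1, h1.2⟩
  refine ⟨v.1, v.2.1, v.2.2, ?_, hE⟩
  intro hc
  apply hvne
  have hμ : v.2.1 = 0 := by
    funext i
    obtain ⟨α, hα⟩ := hA i
    have := (hE i α hα).2
    rw [hc] at this
    simpa [qpoly] using this
  have hν : v.2.2 = 0 := by
    funext i
    obtain ⟨α, hα⟩ := hA i
    have := (hE i α hα).1
    rw [hc, hμ] at this
    simpa [qpoly] using this
  exact Prod.ext hc (Prod.ext hμ hν)



lemma qpoly_eval (k : ℕ) (c : Fin (2*k+1) → ℝ) (x : ℝ) :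
    (qpoly k c).eval x = ∑ m : Fin (2*k+1), c m * x^((m:ℕ)+2) := by
  rw [qpoly, eval_finset_sum]
  exact Finset.sum_congr rfl fun m _ => by simp

lemma sign_trans {a b c : ℝ} (h1 : 0 < a*b) (h2 : 0 < b*c) : 0 < a*c := by
  have hb : b ≠ 0 := by
    rintro rfl
    simp at h1
  have hb2 : 0 < b*b := by
    rcases lt_or_gt_of_ne hb with h | h
    · exact mul_pos_of_neg_of_neg h h
    · exact mul_pos h h
  nlinarith [mul_pos h1 h2]

open Polynomial Finset in
lemma core (k r : ℕ) (hr : 1 ≤ r) (I A : Fin r → Finset ℝ)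
    (hAI : ∀ i, A i ⊆ I i) (hAne : ∀ i, (A i).Nonempty)
    (hIne : ∀ i, (I i).Nonempty)
    (hsep : ∀ i j : Fin r, i < j → ∀ x ∈ I i, ∀ y ∈ I j, x < y)
    (hcard : ∑ i, ((A i).card - 1) = k) :
    ∃ (c : Fin (2*k+1) → ℝ) (μ ν : Fin r → ℝ),
      ∀ i : Fin r, ∀ x ∈ I i,
        ((∑ m : Fin (2*k+1), c m * x^((m:ℕ)+2)) + μ i * x + ν i ≤ 0) ∧
        (((∑ m : Fin (2*k+1), c m * x^((m:ℕ)+2)) + μ i * x + ν i = 0) ↔ x ∈ A i) := by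
  classical
  have hsum : ∑ i, (A i).card = k + r := by
    have h1 : ∀ i : Fin r, (A i).card = ((A i).card - 1) + 1 :=
      fun i => (Nat.succ_pred_eq_of_pos (Finset.card_pos.mpr (hAne i))).symm
    calc ∑ i, (A i).card = ∑ i, (((A i).card - 1) + 1) :=
          Finset.sum_congr rfl fun i _ => h1 i
      _ = (∑ i, ((A i).card - 1)) + r := by
          rw [Finset.sum_add_distrib]
          simp [Finset.card_univ]
      _ = k + r := by rw [hcard]
  obtain ⟨c, μ, ν, hc, hE⟩ := exists_tangent k r A hAne hsum
  set q : ℝ[X] := qpoly k c with hqdef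
  set f : Fin r → ℝ[X] := fun i => q + C (μ i) * X + C (ν i) with hfdef
  obtain ⟨m₀, hm₀⟩ : ∃ m, c m ≠ 0 := by
    by_contra h
    push_neg at h
    exact hc (funext h)
  have hfne : ∀ i, f i ≠ 0 := by
    intro i h
    apply hm₀
    have h2 : (f i).coeff ((m₀:ℕ)+2) = c m₀ := by
      simp only [hfdef, coeff_add, coeff_C_mul, coeff_X, coeff_C]
      rw [hqdef, qpoly_coeff_add_two]
      norm_num
    rw [h, coeff_zero] at h2
    exact h2.symm
  have hfeval : ∀ i x, (f i).eval x = q.eval x + μ i * x + ν i := by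
    intro i x
    simp [hfdef]
  have hfd : ∀ i, derivative (f i) = derivative q + C (μ i) := by
    intro i
    simp [hfdef]
  have hfdd : ∀ i, derivative (derivative (f i)) = derivative (derivative q) := by
    intro i
    rw [hfd i]
    simp
  set q2 : ℝ[X] := derivative (derivative q) with hq2def
  have hq2ne : q2 ≠ 0 := by
    intro h
    apply hm₀
    have h1 : q2.coeff (m₀:ℕ) = c m₀ * (((m₀:ℕ):ℝ)+2) * (((m₀:ℕ):ℝ)+1) := by
      rw [hq2def, coeff_derivative, coeff_derivative, hqdef, qpoly_coeff_add_two]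
      push_cast
      ring
    rw [h, coeff_zero] at h1
    have h2 : ((((m₀:ℕ):ℝ)+2) : ℝ) ≠ 0 := by positivity
    have h3 : ((((m₀:ℕ):ℝ)+1) : ℝ) ≠ 0 := by positivity
    rcases mul_eq_zero.mp h1.symm with h4 | h4
    · rcases mul_eq_zero.mp h4 with h5 | h5
      · exact h5
      · exact absurd h5 h2
    · exact absurd h4 h3
  have hq2deg : q2.natDegree ≤ 2*k := by
    have h1 := Polynomial.natDegree_derivative_le q
    have h2 := Polynomial.natDegree_derivative_le (derivative q)
    have h3 := qpoly_natDegree_le k c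
    rw [← hqdef] at h3
    rw [hq2def]
    omega
  have htan : ∀ i, ∀ α ∈ A i, (f i).eval α = 0 ∧ (derivative (f i)).eval α = 0 := by
    intro i α hα
    obtain ⟨h1, h2⟩ := hE i α hα
    constructor
    · rw [hfeval]; exact h1
    · rw [hfd]; simpa using h2
  set P : Fin r → ℝ[X] := fun i => ∏ α ∈ A i, (X - C α) with hPdef
  have hdvd : ∀ i, (P i)^2 ∣ f i := by
    intro i
    refine prod_sq_dvd _ _ fun α hα => ?_
    exact sq_dvd_of_double_root _ _ (htan i α hα).1 (htan i α hα).2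
  choose g hfg using hdvd
  have hgne : ∀ i, g i ≠ 0 := by
    intro i h
    exact hfne i (by rw [hfg i, h, mul_zero])
  -- interval endpoints
  set lo : Fin r → ℝ := fun i => (I i).min' (hIne i) with hlo
  set hi : Fin r → ℝ := fun i => (I i).max' (hIne i) with hhi
  set alo : Fin r → ℝ := fun i => (A i).min' (hAne i) with halo
  set ahi : Fin r → ℝ := fun i => (A i).max' (hAne i) with hahi
  have hmemI : ∀ i, ∀ x ∈ I i, lo i ≤ x ∧ x ≤ hi i :=
    fun i x hx => ⟨Finset.min'_le _ _ hx, Finset.le_max' _ _ hx⟩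
  have hmemA : ∀ i, ∀ x ∈ A i, alo i ≤ x ∧ x ≤ ahi i :=
    fun i x hx => ⟨Finset.min'_le _ _ hx, Finset.le_max' _ _ hx⟩
  have haloA : ∀ i, alo i ∈ A i := fun i => Finset.min'_mem _ _
  have hahiA : ∀ i, ahi i ∈ A i := fun i => Finset.max'_mem _ _
  -- root count lower bound for f i on any interval containing A i
  have hcnt : ∀ i (s t : ℝ), (∀ x ∈ A i, s ≤ x ∧ x ≤ t) →
      2 * (A i).card ≤ Multiset.card (rIn (f i) s t) := by
    intro i s t hin
    have hP2 : ((P i)^2).roots = 2 • (A i).val := by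
      rw [hPdef, roots_pow, roots_prod_X_sub_C]
    have hle : ((P i)^2).roots ≤ (f i).roots :=
      Polynomial.roots.le_of_dvd (hfne i) ⟨g i, hfg i⟩
    have h1 : rIn ((P i)^2) s t = 2 • (A i).val := by
      rw [rIn, hP2]
      rw [Multiset.filter_eq_self]
      intro x hx
      exact hin x (Multiset.mem_nsmul.mp hx).2
    have h2 : Multiset.card (rIn ((P i)^2) s t) = 2 * (A i).card := by
      rw [h1, Multiset.card_nsmul]
      rfl
    rw [← h2]
    exact Multiset.card_le_card (Multiset.filter_le_filter _ hle)
  have hRolle : ∀ i (s t : ℝ),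
      Multiset.card (rIn (f i) s t) ≤ Multiset.card (rIn q2 s t) + 2 := by
    intro i s t
    have h1 := rIn_card_le_derivative (f i) s t
    have h2 := rIn_card_le_derivative (derivative (f i)) s t
    rw [hfdd i] at h2
    omega
  set N2 : Fin r → ℕ := fun i => Multiset.card (rIn q2 (lo i) (hi i)) with hN2
  have hN2lower : ∀ i, 2 * (A i).card ≤ N2 i + 2 := by
    intro i
    refine le_trans (hcnt i (lo i) (hi i) (fun x hx => hmemI i x (hAI i hx))) ?_
    exact hRolle i _ _
  have horder : ∀ i j : Fin r, i < j → hi i < lo j :=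
    fun i j hij => hsep i j hij _ (Finset.max'_mem _ _) _ (Finset.min'_mem _ _)
  have hdisj : ∀ i ∈ (univ : Finset (Fin r)), ∀ j ∈ univ, i ≠ j →
      ∀ x : ℝ, ¬((lo i ≤ x ∧ x ≤ hi i) ∧ (lo j ≤ x ∧ x ≤ hi j)) := by
    rintro i _ j _ hij x ⟨⟨h1, h2⟩, ⟨h3, h4⟩⟩
    rcases lt_or_gt_of_ne hij with h | h
    · exact absurd (lt_of_le_of_lt h2 (horder i j h)) (not_lt.mpr h3)
    · exact absurd (lt_of_le_of_lt h4 (horder j i h)) (not_lt.mpr h1)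
  have hN2sum_le : ∑ i, N2 i ≤ Multiset.card q2.roots := by
    exact sum_card_filter_le univ (fun i x => lo i ≤ x ∧ x ≤ hi i) q2.roots hdisj
  have hrootsle : Multiset.card q2.roots ≤ 2*k :=
    le_trans (Polynomial.card_roots' q2) hq2deg
  have htot : ∑ i, 2 * (A i).card = 2*k + 2*r := by
    rw [← Finset.mul_sum, hsum]
    ring
  have hN2exact : ∀ i, N2 i + 2 = 2 * (A i).card := by
    have hle : ∑ i, 2 * (A i).card ≤ ∑ i, (N2 i + 2) :=
      Finset.sum_le_sum fun i _ => hN2lower i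
    have hge : ∑ i, (N2 i + 2) ≤ 2*k + 2*r := by
      rw [Finset.sum_add_distrib]
      simp only [Finset.sum_const, Finset.card_univ, Fintype.card_fin, smul_eq_mul]
      omega
    rw [htot] at hle
    have heq : ∑ i, 2 * (A i).card = ∑ i, (N2 i + 2) := by omega
    have := (Finset.sum_eq_sum_iff_of_le (fun i _ => hN2lower i)).mp heq
    intro i
    exact (this i (Finset.mem_univ i)).symm
  have hrootcard : Multiset.card q2.roots = 2*k := by
    have h1 : ∑ i, N2 i + 2*r = 2*k + 2*r := by
      have := Finset.sum_congr rfl (fun i (_ : i ∈ univ) => hN2exact i)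
      rw [Finset.sum_add_distrib] at this
      simp only [Finset.sum_const, Finset.card_univ, Fintype.card_fin, smul_eq_mul] at this
      rw [htot] at this
      omega
    omega
  -- refined: roots of q2 in [lo i, hi i] are in [alo i, ahi i]
  have hsubm : ∀ i, rIn q2 (alo i) (ahi i) ≤ rIn q2 (lo i) (hi i) := by
    intro i
    have h1 : rIn q2 (alo i) (ahi i) =
        Multiset.filter (fun x => alo i ≤ x ∧ x ≤ ahi i) (rIn q2 (lo i) (hi i)) := by
      rw [rIn, rIn, Multiset.filter_filter]
      refine Multiset.filter_congr ?_
      intro x _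
      constructor
      · intro ⟨h1, h2⟩
        have h3 := (hmemI i _ (hAI i (haloA i))).1
        have h4 := (hmemI i _ (hAI i (hahiA i))).2
        exact ⟨⟨h1, h2⟩, le_trans h3 h1, le_trans h2 h4⟩
      · rintro ⟨h, _⟩
        exact h
    rw [h1]
    exact Multiset.filter_le _ _
  have hIccEq : ∀ i, rIn q2 (alo i) (ahi i) = rIn q2 (lo i) (hi i) := by
    intro i
    refine Multiset.eq_of_le_of_card_le (hsubm i) ?_
    have h1 : 2 * (A i).card ≤ Multiset.card (rIn q2 (alo i) (ahi i)) + 2 :=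
      le_trans (hcnt i _ _ (hmemA i)) (hRolle i _ _)
    have h2 : Multiset.card (rIn q2 (lo i) (hi i)) + 2 = 2 * (A i).card := hN2exact i
    omega
  -- every root of q2 lies in some [alo l, ahi l]
  have hrootloc : ∀ ρ ∈ q2.roots, ∃ l, alo l ≤ ρ ∧ ρ ≤ ahi l := by
    intro ρ hρ
    by_contra hno
    push_neg at hno
    have hnotin : ∀ l, ¬(lo l ≤ ρ ∧ ρ ≤ hi l) := by
      intro l hl
      have h1 : ρ ∈ rIn q2 (lo l) (hi l) := Multiset.mem_filter.mpr ⟨hρ, hl⟩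
      rw [← hIccEq l] at h1
      have h2 := (Multiset.mem_filter.mp h1).2
      exact absurd h2.2 (not_le.mpr (hno l h2.1))
    have h2 : ∀ l : Fin r, rIn q2 (lo l) (hi l) =
        (q2.roots.erase ρ).filter (fun x => lo l ≤ x ∧ x ≤ hi l) := by
      intro l
      rw [rIn]
      exact filter_erase_of_not _ _ ρ hρ (hnotin l)
    have h3 : ∑ i, N2 i ≤ Multiset.card (q2.roots.erase ρ) := by
      have h3a := sum_card_filter_le univ (fun l (x : ℝ) => lo l ≤ x ∧ x ≤ hi l)
        (q2.roots.erase ρ) hdisj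
      refine le_trans (le_of_eq ?_) h3a
      refine Finset.sum_congr rfl fun l _ => ?_
      show Multiset.card (rIn q2 (lo l) (hi l)) = _
      rw [h2 l]
    rw [Multiset.card_erase_of_mem hρ, hrootcard] at h3
    rw [show (2*k).pred = 2*k - 1 from rfl] at h3
    have h4 : ∑ i, N2 i = 2*k := by
      have := Finset.sum_congr rfl (fun i (_ : i ∈ univ) => hN2exact i)
      rw [Finset.sum_add_distrib] at this
      simp only [Finset.sum_const, Finset.card_univ, Fintype.card_fin, smul_eq_mul] at this
      rw [htot] at this
      omega
    rw [h4] at h3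
    have h5 : 0 < Multiset.card q2.roots :=
      Multiset.card_pos_iff_exists_mem.mpr ⟨ρ, hρ⟩
    rw [hrootcard] at h5
    omega
  -- g i has no roots on [lo i, hi i]
  have hgno : ∀ i, ∀ z, lo i ≤ z → z ≤ hi i → (g i).eval z ≠ 0 := by
    intro i z h1 h2 h0
    have hzr : z ∈ (g i).roots := by
      rw [Polynomial.mem_roots (hgne i)]
      exact h0
    have hmul : (f i).roots = ((P i)^2).roots + (g i).roots := by
      rw [hfg i]
      exact Polynomial.roots_mul (by rw [← hfg i]; exact hfne i)
    have hP2 : ((P i)^2).roots = 2 • (A i).val := by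
      rw [hPdef, roots_pow, roots_prod_X_sub_C]
    have hcard1 : 2 * (A i).card + 1 ≤ Multiset.card (rIn (f i) (lo i) (hi i)) := by
      rw [rIn, hmul, Multiset.filter_add, Multiset.card_add]
      have hA2 : Multiset.card
          (Multiset.filter (fun x => lo i ≤ x ∧ x ≤ hi i) (((P i)^2).roots))
          = 2 * (A i).card := by
        rw [hP2]
        rw [Multiset.filter_eq_self.mpr]
        · rw [Multiset.card_nsmul]
          rfl
        · intro x hx
          exact hmemI i x (hAI i (Multiset.mem_nsmul.mp hx).2)
      have hg1 : 1 ≤ Multiset.card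
          (Multiset.filter (fun x => lo i ≤ x ∧ x ≤ hi i) ((g i).roots)) := by
        rw [Nat.one_le_iff_ne_zero, ← Nat.pos_iff_ne_zero]
        refine Multiset.card_pos_iff_exists_mem.mpr ⟨z, ?_⟩
        exact Multiset.mem_filter.mpr ⟨hzr, h1, h2⟩
      omega
    have hb1 := le_trans hcard1 (hRolle i (lo i) (hi i))
    have hb2 : Multiset.card (rIn q2 (lo i) (hi i)) + 2 = 2 * (A i).card := hN2exact i
    omega
  -- evaluation identity at points of A i
  have hkey : ∀ i, ∀ α ∈ A i, ∃ u : ℝ, u ≠ 0 ∧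
      q2.eval α = 2 * (u^2 * (g i).eval α) := by
    intro i α hα
    refine ⟨∏ β ∈ (A i).erase α, (α - β), ?_, ?_⟩
    · refine Finset.prod_ne_zero_iff.mpr ?_
      intro β hβ
      have := (Finset.mem_erase.mp hβ).1
      exact sub_ne_zero.mpr (Ne.symm this)
    · have hPfact : P i = (X - C α) * ∏ β ∈ (A i).erase α, (X - C β) := by
        rw [hPdef]
        exact (Finset.mul_prod_erase _ _ hα).symm
      have hση : f i = (X - C α)^2 * ((∏ β ∈ (A i).erase α, (X - C β))^2 * g i) := by
        rw [hfg i, hPfact]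
        ring
      have h2 := eval_dd_sq_mul ((∏ β ∈ (A i).erase α, (X - C β))^2 * g i) α
      rw [← hση, hfdd i] at h2
      rw [h2, eval_mul, eval_pow, eval_prod]
      simp only [eval_sub, eval_X, eval_C]
  have hq2A : ∀ i, ∀ α ∈ A i, q2.eval α ≠ 0 := by
    intro i α hα
    obtain ⟨u, hu, he⟩ := hkey i α hα
    rw [he]
    have hg0 : (g i).eval α ≠ 0 :=
      hgno i α (hmemI i α (hAI i hα)).1 (hmemI i α (hAI i hα)).2
    positivity
  -- signs
  set sgn : Fin r → ℝ := fun i => (g i).eval (ahi i) with hsgn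
  have hsne : ∀ i, sgn i ≠ 0 := by
    intro i
    exact hgno i (ahi i) (hmemI i _ (hAI i (hahiA i))).1 (hmemI i _ (hAI i (hahiA i))).2
  -- adjacent chain
  have hchain : ∀ (na : ℕ) (h1 : na < r) (h2 : na + 1 < r),
      0 < sgn ⟨na, h1⟩ * sgn ⟨na+1, h2⟩ := by
    intro na h1 h2
    set i : Fin r := ⟨na, h1⟩
    set j : Fin r := ⟨na+1, h2⟩
    have hij : i < j := by
      simp [i, j, Fin.lt_def]
    have hord : ahi i < alo j := hsep i j hij _ (hAI i (hahiA i)) _ (hAI j (haloA j))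
    -- q2 has no roots on [ahi i, alo j]
    have hgap : ∀ z, ahi i ≤ z → z ≤ alo j → q2.eval z ≠ 0 := by
      intro z hz1 hz2 h0
      have hzr : z ∈ q2.roots := by
        rw [Polynomial.mem_roots hq2ne]
        exact h0
      obtain ⟨l, hl1, hl2⟩ := hrootloc z hzr
      rcases lt_trichotomy l i with hl | hl | hl
      · have : ahi l < ahi i := hsep l i hl _ (hAI l (hahiA l)) _ (hAI i (hahiA i))
        linarith
      · have hzi : z = ahi i := le_antisymm (hl ▸ hl2) hz1
        rw [hzi] at h0
        exact hq2A i _ (hahiA i) h0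
      · rcases lt_trichotomy l j with hl' | hl' | hl'
        · have hli : i < l := hl
          have hlj : l < j := hl'
          rw [Fin.lt_def] at hli hlj
          have e1 : (i : ℕ) = na := rfl
          have e2 : (j : ℕ) = na + 1 := rfl
          omega
        · have hzj : z = alo j := le_antisymm hz2 (hl' ▸ hl1)
          rw [hzj] at h0
          exact hq2A j _ (haloA j) h0
        · have : alo j < alo l := hsep j l hl' _ (hAI j (haloA j)) _ (hAI l (haloA l))
          linarith
    have hq2pos : 0 < q2.eval (ahi i) * q2.eval (alo j) :=
      eval_mul_pos_of_no_root q2 (ahi i) (alo j) (fun z hz1 hz2 => hgap z hz1 hz2)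
        le_rfl hord.le hord.le le_rfl
    obtain ⟨u, hu, heu⟩ := hkey i (ahi i) (hahiA i)
    obtain ⟨v, hv, hev⟩ := hkey j (alo j) (haloA j)
    rw [heu, hev] at hq2pos
    have hgg : 0 < (g i).eval (ahi i) * (g j).eval (alo j) := by
      by_contra hn
      push_neg at hn
      have huv : 0 < (2*u^2) * (2*v^2) := by positivity
      have : (2 * (u ^ 2 * (g i).eval (ahi i))) * (2 * (v ^ 2 * (g j).eval (alo j)))
          = ((2*u^2) * (2*v^2)) * ((g i).eval (ahi i) * (g j).eval (alo j)) := by ring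
      rw [this] at hq2pos
      nlinarith
    have hjj : 0 < (g j).eval (alo j) * (g j).eval (ahi j) := by
      refine eval_mul_pos_of_no_root (g j) (lo j) (hi j)
        (fun z hz1 hz2 => hgno j z hz1 hz2) ?_ ?_ ?_ ?_
      · exact (hmemI j _ (hAI j (haloA j))).1
      · exact (hmemI j _ (hAI j (haloA j))).2
      · exact (hmemI j _ (hAI j (hahiA j))).1
      · exact (hmemI j _ (hAI j (hahiA j))).2
    exact sign_trans hgg hjj
  have hr0 : 0 < r := hr
  set i0 : Fin r := ⟨0, hr0⟩ with hi0
  have hglob : ∀ (na : ℕ) (h1 : na < r), 0 < sgn i0 * sgn ⟨na, h1⟩ := by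
    intro na
    induction na with
    | zero =>
      intro h1
      have : (⟨0, h1⟩ : Fin r) = i0 := rfl
      rw [this]
      exact mul_self_pos.mpr (hsne i0)
    | succ nb ih =>
      intro h1
      have hb : nb < r := by omega
      exact sign_trans (ih hb) (hchain nb hb h1)
  -- final construction
  set d : ℝ := if 0 < sgn i0 then -1 else 1 with hd
  refine ⟨fun m => d * c m, fun i => d * μ i, fun i => d * ν i, ?_⟩
  intro i x hx
  have hxlo := (hmemI i x hx).1
  have hxhi := (hmemI i x hx).2
  have hval : (∑ m : Fin (2*k+1), (d * c m) * x^((m:ℕ)+2)) + (d * μ i) * x + (d * ν i)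
      = d * (f i).eval x := by
    have hs : ∑ m : Fin (2*k+1), (d * c m) * x^((m:ℕ)+2)
        = d * ∑ m : Fin (2*k+1), c m * x^((m:ℕ)+2) := by
      rw [Finset.mul_sum]
      exact Finset.sum_congr rfl fun m _ => by ring
    rw [hs, hfeval, hqdef, qpoly_eval]
    ring
  have hmain : ∀ hxA : x ∉ A i, d * (f i).eval x < 0 := by
    intro hxA
    have hPx : 0 < ((P i)^2).eval x := by
      rw [hPdef, eval_pow]
      have : (∏ α ∈ A i, (X - C α)).eval x ≠ 0 := by
        rw [eval_prod]
        refine Finset.prod_ne_zero_iff.mpr fun α hα => ?_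
        simp only [eval_sub, eval_X, eval_C]
        exact sub_ne_zero.mpr (fun h => hxA (h ▸ hα))
      positivity
    have hfx : (f i).eval x = ((P i)^2).eval x * (g i).eval x := by
      rw [hfg i, eval_mul]
    have hgx : 0 < (g i).eval x * sgn i := by
      exact eval_mul_pos_of_no_root (g i) (lo i) (hi i)
        (fun z hz1 hz2 => hgno i z hz1 hz2) hxlo hxhi
        (hmemI i _ (hAI i (hahiA i))).1 (hmemI i _ (hAI i (hahiA i))).2
    have hgx0 : 0 < sgn i0 * (g i).eval x := by
      refine sign_trans ?_ ?_ (b := sgn i)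
      · exact hglob i.1 i.2
      · rw [mul_comm]
        exact hgx
    rcases lt_trichotomy (sgn i0) 0 with hs | hs | hs
    · -- sgn i0 < 0 : d = 1, g i x < 0
      have hd1 : d = 1 := by
        rw [hd, if_neg (by linarith)]
      have hgneg : (g i).eval x < 0 := by
        by_contra hp
        push_neg at hp
        nlinarith
      rw [hd1, one_mul, hfx]
      exact mul_neg_of_pos_of_neg hPx hgneg
    · exact absurd hs (hsne i0)
    · have hd1 : d = -1 := by
        rw [hd, if_pos hs]
      have hgpos : 0 < (g i).eval x := by
        by_contra hp
        push_neg at hp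
        nlinarith
      rw [hd1, hfx]
      nlinarith
  constructor
  · rw [hval]
    by_cases hxA : x ∈ A i
    · rw [(htan i x hxA).1, mul_zero]
    · exact (hmain hxA).le
  · rw [hval]
    constructor
    · intro h0
      by_contra hxA
      exact absurd h0 (ne_of_lt (hmain hxA))
    · intro hxA
      rw [(htan i x hxA).1, mul_zero]

end


/-- There exist pairwise disjoint index sets `I_1, …, I_r ⊆ ℝ` with
`|I_i| = n_i + 1` such that every `k`-face `A_1 × ⋯ × A_r` of the product of simplices
yields a linear inequality `⟨c, w_a⟩ ≤ β` valid on all `w_a` and tight exactly on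
`A_1 × ⋯ × A_r`. -/
theorem statement4 (k r : ℕ) (hr : 1 ≤ r) (n : Fin r → ℕ) (hn : ∀ i, 1 ≤ n i) :
    ∃ I : Fin r → Finset ℝ,
      (∀ i j, i ≠ j → Disjoint (I i) (I j)) ∧
      (∀ i, (I i).card = n i + 1) ∧
      (∀ A : Fin r → Finset ℝ, (∀ i, A i ⊆ I i) → (∀ i, (A i).Nonempty) →
        (∑ i, ((A i).card - 1) = k) →
        ∃ (c : Fin (2 * k + r + 1) → ℝ) (β : ℝ),
          (∀ a : Fin r → ℝ, (∀ i, a i ∈ I i) →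
            ∑ j, c j * wvec k r a j ≤ β) ∧
          (∀ a : Fin r → ℝ, (∀ i, a i ∈ I i) →
            ((∑ j, c j * wvec k r a j = β) ↔ ∀ i, a i ∈ A i))) := by

  classical
  set M : ℕ := (Finset.univ.sup n) + 2 with hM
  have hnM : ∀ i, n i + 2 ≤ M := by
    intro i
    have := Finset.le_sup (f := n) (Finset.mem_univ i)
    omega
  set I : Fin r → Finset ℝ :=
    fun i => (Finset.range (n i + 1)).image (fun t : ℕ => ((i : ℕ) * M + t : ℝ)) with hI
  have hmem : ∀ i : Fin r, ∀ x ∈ I i, ∃ t : ℕ, t ≤ n i ∧ x = ((i : ℕ) * M + t : ℝ) := by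
    intro i x hx
    rw [hI] at hx
    obtain ⟨t, ht, rfl⟩ := Finset.mem_image.mp hx
    exact ⟨t, Nat.lt_succ_iff.mp (Finset.mem_range.mp ht), rfl⟩
  have hsep : ∀ i j : Fin r, i < j → ∀ x ∈ I i, ∀ y ∈ I j, x < y := by
    intro i j hij x hx y hy
    obtain ⟨t, ht, rfl⟩ := hmem i x hx
    obtain ⟨u, hu, rfl⟩ := hmem j y hy
    have hij' : (i : ℕ) + 1 ≤ (j : ℕ) := hij
    have hnat : (i : ℕ) * M + t < (j : ℕ) * M + u := by
      have h1 : (i : ℕ) * M + t < (i : ℕ) * M + M := by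
        have := hnM i
        omega
      have h2 : (i : ℕ) * M + M ≤ (j : ℕ) * M := by
        have h3 : ((i : ℕ) + 1) * M ≤ (j : ℕ) * M := Nat.mul_le_mul_right M hij'
        rw [add_mul, one_mul] at h3
        omega
      omega
    push_cast
    exact_mod_cast hnat
  have hIne : ∀ i, (I i).Nonempty := by
    intro i
    rw [hI]
    exact (Finset.nonempty_range_iff.mpr (by omega)).image _
  have hcards : ∀ i, (I i).card = n i + 1 := by
    intro i
    rw [hI, Finset.card_image_of_injective _ ?_, Finset.card_range]
    intro a b hab
    simp only at hab
    exact_mod_cast add_left_cancel hab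
  have hdisj : ∀ i j, i ≠ j → Disjoint (I i) (I j) := by
    intro i j hij
    rw [Finset.disjoint_left]
    intro x hxi hxj
    rcases lt_or_gt_of_ne hij with h | h
    · exact absurd rfl (ne_of_lt (hsep i j h x hxi x hxj))
    · exact absurd rfl (ne_of_lt (hsep j i h x hxj x hxi))
  refine ⟨I, hdisj, hcards, ?_⟩
  intro A hAI hAne hcard
  obtain ⟨c', μ', ν', hprop⟩ := core k r hr I A hAI hAne hIne hsep hcard
  set cv : Fin (2*k+r+1) → ℝ := fun j =>
    if h : (j : ℕ) < r then μ' ⟨(j : ℕ), h⟩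
    else c' ⟨(j : ℕ) - r, by have := j.isLt; omega⟩ with hcv
  have hterm1 : ∀ (a : Fin r → ℝ) (j : Fin (2*k+r+1)) (hj : (j : ℕ) < r),
      cv j * wvec k r a j = μ' ⟨(j:ℕ), hj⟩ * a ⟨(j:ℕ), hj⟩ := by
    intro a j hj
    rw [hcv]
    simp only [wvec, dif_pos hj]
  have hterm2 : ∀ (a : Fin r → ℝ) (j : Fin (2*k+r+1)) (hj : ¬ (j : ℕ) < r)
      (hlt : (j:ℕ) - r < 2*k+1),
      cv j * wvec k r a j = c' ⟨(j:ℕ) - r, hlt⟩ * ∑ i, (a i)^((j:ℕ) - r + 2) := by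
    intro a j hj hlt
    rw [hcv]
    simp only [wvec, dif_neg hj]
  have hsplit : ∀ a : Fin r → ℝ, ∑ j, cv j * wvec k r a j
      = (∑ i, μ' i * a i)
        + ∑ m : Fin (2*k+1), c' m * (∑ i, (a i)^((m:ℕ)+2)) := by
    intro a
    have he : r + (2*k+1) = 2*k+r+1 := by omega
    rw [← Equiv.sum_comp (finCongr he) (fun j => cv j * wvec k r a j)]
    rw [Fin.sum_univ_add]
    congr 1
    · refine Finset.sum_congr rfl fun i _ => ?_
      have hv : ((finCongr he (Fin.castAdd (2*k+1) i)) : ℕ) = (i : ℕ) := rfl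
      have hj : ((finCongr he (Fin.castAdd (2*k+1) i)) : ℕ) < r := by
        rw [hv]; exact i.isLt
      rw [hterm1 a _ hj]
      congr 1
    · refine Finset.sum_congr rfl fun m _ => ?_
      have hv : ((finCongr he (Fin.natAdd r m)) : ℕ) = r + (m : ℕ) := rfl
      have hj : ¬ ((finCongr he (Fin.natAdd r m)) : ℕ) < r := by
        rw [hv]; omega
      have hlt : ((finCongr he (Fin.natAdd r m)) : ℕ) - r < 2*k+1 := by
        rw [hv]; have := m.isLt; omega
      rw [hterm2 a _ hj hlt]
      have hval : ((finCongr he (Fin.natAdd r m)) : ℕ) - r = (m : ℕ) := by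
        rw [hv]; omega
      have hfin : (⟨((finCongr he (Fin.natAdd r m)) : ℕ) - r, hlt⟩ : Fin (2*k+1)) = m :=
        Fin.ext hval
      rw [hfin, hval]
  have hout : ∀ a : Fin r → ℝ, ∑ j, cv j * wvec k r a j
      = (∑ i, ((∑ m : Fin (2*k+1), c' m * (a i)^((m:ℕ)+2)) + μ' i * (a i) + ν' i))
        - ∑ i, ν' i := by
    intro a
    rw [hsplit a]
    have hswap : ∑ m : Fin (2*k+1), c' m * (∑ i, (a i)^((m:ℕ)+2))
        = ∑ i, ∑ m : Fin (2*k+1), c' m * (a i)^((m:ℕ)+2) := by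
      rw [Finset.sum_congr rfl fun m (_ : m ∈ univ) => Finset.mul_sum _ _ _]
      exact Finset.sum_comm
    rw [hswap, Finset.sum_add_distrib, Finset.sum_add_distrib]
    ring
  refine ⟨cv, - ∑ i, ν' i, ?_, ?_⟩
  · intro a ha
    rw [hout a]
    have h1 : ∑ i, ((∑ m : Fin (2*k+1), c' m * (a i)^((m:ℕ)+2)) + μ' i * (a i) + ν' i) ≤ 0 :=
      Finset.sum_nonpos fun i _ => (hprop i (a i) (ha i)).1
    linarith
  · intro a ha
    rw [hout a]
    constructor
    · intro h0
      have hz : ∑ i, ((∑ m : Fin (2*k+1), c' m * (a i)^((m:ℕ)+2)) + μ' i * (a i) + ν' i)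
          = 0 := by linarith
      have hall := (Finset.sum_eq_zero_iff_of_nonpos
        (fun i _ => (hprop i (a i) (ha i)).1)).mp hz
      intro i
      exact (hprop i (a i) (ha i)).2.mp (hall i (Finset.mem_univ i))
    · intro hA
      have hz : ∀ i, (∑ m : Fin (2*k+1), c' m * (a i)^((m:ℕ)+2)) + μ' i * (a i) + ν' i
          = 0 := fun i => (hprop i (a i) (ha i)).2.mpr (hA i)
      rw [Finset.sum_eq_zero fun i _ => hz i]
      ring
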